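/- For every θ ∈ [π/2,π), the self-adjoint operators T̂_0 − T̂_θ^+ and T̂_0 + T̂_θ^− on L²(ℝ) are bounded above by 2^{−1/2}·Id in the sense of quadratic forms (⟨(T̂_0 − T̂_θ^+)φ,φ⟩ ≤ 2^{−1/2}‖φ‖² and ⟨(T̂_0 + T̂_θ^−)φ,φ⟩ ≤ 2^{−1/2}‖φ‖² for all φ); in particular, neither operator has an eigenvalue k > 1/√2. -/

import Mathlib

open MeasureTheory Real
open scoped RealInnerProductSpace

open Set Filter

noncomputable section

/-- `L²(ℝ)` with real scalars. -/
abbrev Hsp : Type := Lp ℝ 2 (volume : Measure ℝ)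

/-- The kernel of the integral operator `T̂_θ` on `L²(ℝ)`. -/
def Tker (θ p q : ℝ) : ℝ :=
  (1 / (2 * Real.pi * Real.sin θ)) *
    ((p ^ 2 - 2 * Real.cos θ * p * q + q ^ 2) / (2 * Real.sin θ ^ 2) + 1)⁻¹

/-- The kernel of the even part `T̂_θ⁺`:  `(T̂_θ(p,q) + T̂_θ(−p,q))/2`. -/
def TkerPlus (θ p q : ℝ) : ℝ := (Tker θ p q + Tker θ (-p) q) / 2

/-- The kernel of the odd part `T̂_θ⁻`:  `(T̂_θ(p,q) − T̂_θ(−p,q))/2`. -/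
def TkerMinus (θ p q : ℝ) : ℝ := (Tker θ p q - Tker θ (-p) q) / 2

lemma exp_prod_eq (β a b x : ℝ) :
    exp (-(2*β)*(a-x)^2) * exp (-(2*β)*(b-x)^2)
      = exp (-(4*β) * (x - (a+b)/2)^2) * exp (-β*(a-b)^2) := by
  rw [← Real.exp_add, ← Real.exp_add]; congr 1; ring

lemma gauss_conv_integrable {β : ℝ} (hβ : 0 < β) (a b : ℝ) :
    Integrable (fun x : ℝ => exp (-(2*β)*(a-x)^2) * exp (-(2*β)*(b-x)^2)) := by
  have h0 : Integrable (fun x : ℝ => exp (-(4*β) * x^2)) :=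
    integrable_exp_neg_mul_sq (by linarith)
  have h := (h0.comp_sub_right ((a+b)/2)).mul_const (exp (-β*(a-b)^2))
  exact h.congr (Eventually.of_forall fun x => (exp_prod_eq β a b x).symm)

lemma gauss_conv {β : ℝ} (hβ : 0 < β) (a b : ℝ) :
    ∫ x : ℝ, exp (-(2*β)*(a-x)^2) * exp (-(2*β)*(b-x)^2)
      = Real.sqrt (π/(4*β)) * exp (-β*(a-b)^2) := by
  simp_rw [exp_prod_eq β a b]
  rw [integral_mul_const, integral_sub_right_eq_self (fun x => exp (-(4*β) * x^2)) ((a+b)/2),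
    integral_gaussian]

/-- The square-representation integrand for the kernels. -/
def GG (γ s ε : ℝ) (ω : ℝ × ℝ) (p : ℝ) : ℝ :=
  Real.sqrt ((s/(2*π)) * exp (-(2*s^2)*ω.1) * Real.sqrt (γ*ω.1/π)) *
  (exp (-((1-γ)*ω.1)*p^2) *
    (exp (-(2*(γ*ω.1))*(p - ω.2)^2) + ε * exp (-(2*(γ*ω.1))*((-p) - ω.2)^2)))

lemma GG_measurable (γ s ε : ℝ) : Measurable (fun w : (ℝ × ℝ) × ℝ => GG γ s ε w.1 w.2) := by
  unfold GG
  fun_prop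

lemma GG_measurable' (γ s ε p : ℝ) : Measurable (fun ω : ℝ × ℝ => GG γ s ε ω p) := by
  unfold GG
  fun_prop

lemma GG_abs_mul_le {γ s ε : ℝ} (hε : ε = 1 ∨ ε = -1) (ω : ℝ × ℝ) (p q : ℝ) :
    |GG γ s ε ω p * GG γ s ε ω q| ≤ GG γ s 1 ω p * GG γ s 1 ω q := by
  have key : ∀ r : ℝ, |GG γ s ε ω r| ≤ GG γ s 1 ω r := by
    intro r
    unfold GG
    rcases hε with h | h <;> subst h
    · rw [abs_of_nonneg (by positivity)]
    · rw [abs_mul, abs_of_nonneg (Real.sqrt_nonneg _), abs_mul,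
        abs_of_nonneg (le_of_lt (Real.exp_pos _))]
      refine mul_le_mul_of_nonneg_left ?_ (Real.sqrt_nonneg _)
      refine mul_le_mul_of_nonneg_left ?_ (le_of_lt (Real.exp_pos _))
      rw [neg_one_mul]
      calc |exp (-(2*(γ*ω.1))*(r - ω.2)^2) + -exp (-(2*(γ*ω.1))*((-r) - ω.2)^2)|
          ≤ |exp (-(2*(γ*ω.1))*(r - ω.2)^2)| + |(-exp (-(2*(γ*ω.1))*((-r) - ω.2)^2))| :=
            abs_add_le _ _
        _ = exp (-(2*(γ*ω.1))*(r - ω.2)^2) + exp (-(2*(γ*ω.1))*((-r) - ω.2)^2) := by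
            rw [abs_neg, abs_of_nonneg (le_of_lt (Real.exp_pos _)),
              abs_of_nonneg (le_of_lt (Real.exp_pos _))]
        _ = exp (-(2*(γ*ω.1))*(r - ω.2)^2) + 1 * exp (-(2*(γ*ω.1))*((-r) - ω.2)^2) := by ring
  rw [abs_mul]
  have h1 : (0:ℝ) ≤ GG γ s 1 ω q := le_trans (abs_nonneg _) (key q)
  exact mul_le_mul (key p) (key q) (abs_nonneg _) (le_trans (abs_nonneg _) (key p))

lemma GG_sec {γ s : ℝ} (hγ : 0 < γ) (hs : 0 < s) {ε : ℝ} (hε : ε = 1 ∨ ε = -1) (p q : ℝ)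
    {t : ℝ} (ht : 0 < t) :
    Integrable (fun x => GG γ s ε (t,x) p * GG γ s ε (t,x) q) ∧
    ∫ x, GG γ s ε (t,x) p * GG γ s ε (t,x) q
      = (s/(2*π)) * (exp (-((p^2+q^2-2*γ*p*q+2*s^2)*t))
          + ε * exp (-((p^2+q^2+2*γ*p*q+2*s^2)*t))) := by
  have hβ : 0 < γ * t := mul_pos hγ ht
  have hr2nn : (0:ℝ) ≤ (s/(2*π)) * exp (-(2*s^2)*t) * Real.sqrt (γ*t/π) := by positivity
  have hsq : Real.sqrt ((s/(2*π)) * exp (-(2*s^2)*t) * Real.sqrt (γ*t/π))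
      * Real.sqrt ((s/(2*π)) * exp (-(2*s^2)*t) * Real.sqrt (γ*t/π))
      = (s/(2*π)) * exp (-(2*s^2)*t) * Real.sqrt (γ*t/π) := Real.mul_self_sqrt hr2nn
  have hε2 : ε * ε = 1 := by rcases hε with h|h <;> subst h <;> norm_num
  have hexp : ∀ x, GG γ s ε (t,x) p * GG γ s ε (t,x) q
      = ((s/(2*π)) * exp (-(2*s^2)*t) * Real.sqrt (γ*t/π)
          * (exp (-((1-γ)*t)*p^2) * exp (-((1-γ)*t)*q^2))) *
        ( (exp (-(2*(γ*t))*(p-x)^2) * exp (-(2*(γ*t))*(q-x)^2)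
          + ε * (exp (-(2*(γ*t))*(p-x)^2) * exp (-(2*(γ*t))*((-q)-x)^2)))
          + (ε * (exp (-(2*(γ*t))*((-p)-x)^2) * exp (-(2*(γ*t))*(q-x)^2))
          + (exp (-(2*(γ*t))*((-p)-x)^2) * exp (-(2*(γ*t))*((-q)-x)^2)))) := by
    intro x
    show (Real.sqrt ((s/(2*π)) * exp (-(2*s^2)*t) * Real.sqrt (γ*t/π)) *
      (exp (-((1-γ)*t)*p^2) *
        (exp (-(2*(γ*t))*(p - x)^2) + ε * exp (-(2*(γ*t))*((-p) - x)^2)))) *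
      (Real.sqrt ((s/(2*π)) * exp (-(2*s^2)*t) * Real.sqrt (γ*t/π)) *
      (exp (-((1-γ)*t)*q^2) *
        (exp (-(2*(γ*t))*(q - x)^2) + ε * exp (-(2*(γ*t))*((-q) - x)^2)))) = _
    linear_combination (exp (-((1-γ)*t)*p^2) * exp (-((1-γ)*t)*q^2) *
        (exp (-(2*(γ*t))*(p-x)^2) + ε * exp (-(2*(γ*t))*((-p)-x)^2)) *
        (exp (-(2*(γ*t))*(q-x)^2) + ε * exp (-(2*(γ*t))*((-q)-x)^2))) * hsq
      + ((s/(2*π)) * exp (-(2*s^2)*t) * Real.sqrt (γ*t/π) *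
        (exp (-((1-γ)*t)*p^2) * exp (-((1-γ)*t)*q^2)) *
        (exp (-(2*(γ*t))*((-p)-x)^2) * exp (-(2*(γ*t))*((-q)-x)^2))) * hε2
  constructor
  · have base : Integrable (fun x : ℝ =>
        ( (exp (-(2*(γ*t))*(p-x)^2) * exp (-(2*(γ*t))*(q-x)^2)
          + ε * (exp (-(2*(γ*t))*(p-x)^2) * exp (-(2*(γ*t))*((-q)-x)^2)))
          + (ε * (exp (-(2*(γ*t))*((-p)-x)^2) * exp (-(2*(γ*t))*(q-x)^2))
          + (exp (-(2*(γ*t))*((-p)-x)^2) * exp (-(2*(γ*t))*((-q)-x)^2))))) :=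
      ((gauss_conv_integrable hβ p q).add ((gauss_conv_integrable hβ p (-q)).const_mul ε)).add
        (((gauss_conv_integrable hβ (-p) q).const_mul ε).add (gauss_conv_integrable hβ (-p) (-q)))
    exact (base.const_mul _).congr (Eventually.of_forall fun x => (hexp x).symm)
  · rw [integral_congr_ae (Eventually.of_forall hexp)]
    rw [integral_const_mul]
    have I1 := gauss_conv_integrable hβ p q
    have I2 : Integrable (fun x : ℝ =>
        ε * (exp (-(2*(γ*t))*(p-x)^2) * exp (-(2*(γ*t))*((-q)-x)^2))) :=
      (gauss_conv_integrable hβ p (-q)).const_mul ε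
    have I3 : Integrable (fun x : ℝ =>
        ε * (exp (-(2*(γ*t))*((-p)-x)^2) * exp (-(2*(γ*t))*(q-x)^2))) :=
      (gauss_conv_integrable hβ (-p) q).const_mul ε
    have I4 := gauss_conv_integrable hβ (-p) (-q)
    have I12 : Integrable (fun x : ℝ =>
        exp (-(2*(γ*t))*(p-x)^2) * exp (-(2*(γ*t))*(q-x)^2)
          + ε * (exp (-(2*(γ*t))*(p-x)^2) * exp (-(2*(γ*t))*((-q)-x)^2))) := I1.add I2
    have I34 : Integrable (fun x : ℝ =>
        ε * (exp (-(2*(γ*t))*((-p)-x)^2) * exp (-(2*(γ*t))*(q-x)^2))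
          + exp (-(2*(γ*t))*((-p)-x)^2) * exp (-(2*(γ*t))*((-q)-x)^2)) := I3.add I4
    rw [integral_add I12 I34, integral_add I1 I2, integral_add I3 I4,
      integral_const_mul ε, integral_const_mul ε,
      gauss_conv hβ p q, gauss_conv hβ p (-q), gauss_conv hβ (-p) q, gauss_conv hβ (-p) (-q)]
    have hhalf : Real.sqrt (γ*t/π) * Real.sqrt (π/(4*(γ*t))) = 1/2 := by
      rw [← Real.sqrt_mul (by positivity)]
      rw [show γ*t/π * (π/(4*(γ*t))) = 1/4 by
        field_simp]
      rw [show (1/4 : ℝ) = (1/2)^2 by norm_num, Real.sqrt_sq (by norm_num)]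
    have f₁ : exp (-(2*s^2)*t) * (exp (-((1-γ)*t)*p^2) * exp (-((1-γ)*t)*q^2))
        * exp (-(γ*t)*(p-q)^2) = exp (-((p^2+q^2-2*γ*p*q+2*s^2)*t)) := by
      rw [← Real.exp_add, ← Real.exp_add, ← Real.exp_add]; congr 1; ring
    have f₂ : exp (-(2*s^2)*t) * (exp (-((1-γ)*t)*p^2) * exp (-((1-γ)*t)*q^2))
        * exp (-(γ*t)*(p - -q)^2) = exp (-((p^2+q^2+2*γ*p*q+2*s^2)*t)) := by
      rw [← Real.exp_add, ← Real.exp_add, ← Real.exp_add]; congr 1; ring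
    have f₃ : exp (-(2*s^2)*t) * (exp (-((1-γ)*t)*p^2) * exp (-((1-γ)*t)*q^2))
        * exp (-(γ*t)*(-p - q)^2) = exp (-((p^2+q^2+2*γ*p*q+2*s^2)*t)) := by
      rw [← Real.exp_add, ← Real.exp_add, ← Real.exp_add]; congr 1; ring
    have f₄ : exp (-(2*s^2)*t) * (exp (-((1-γ)*t)*p^2) * exp (-((1-γ)*t)*q^2))
        * exp (-(γ*t)*(-p - -q)^2) = exp (-((p^2+q^2-2*γ*p*q+2*s^2)*t)) := by
      rw [← Real.exp_add, ← Real.exp_add, ← Real.exp_add]; congr 1; ring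
    linear_combination ((s/(2*π)) * (exp (-(2*s^2)*t) *
        (exp (-((1-γ)*t)*p^2) * exp (-((1-γ)*t)*q^2))) *
        (exp (-(γ*t)*(p-q)^2) + ε * exp (-(γ*t)*(p - -q)^2)
          + ε * exp (-(γ*t)*(-p - q)^2) + exp (-(γ*t)*(-p - -q)^2))) * hhalf
      + ((s/(4*π)) * Real.sqrt (γ*t/π) * Real.sqrt (π/(4*(γ*t))) * 0) * hhalf
      + (s/(4*π)) * f₁ + ((s/(4*π)) * ε) * f₂ + ((s/(4*π)) * ε) * f₃ + (s/(4*π)) * f₄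

lemma laplace_Ioi {D : ℝ} (hD : 0 < D) :
    ∫ t in Ioi (0:ℝ), exp (-(D * t)) = D⁻¹ := by
  have h := integral_comp_mul_left_Ioi (fun u => exp (-u)) 0 hD
  simp only [mul_zero, integral_exp_neg_Ioi, neg_zero, Real.exp_zero, smul_eq_mul, mul_one] at h
  exact h

lemma exp_neg_mul_integrableOn {D : ℝ} (hD : 0 < D) :
    IntegrableOn (fun t : ℝ => exp (-(D*t))) (Ioi (0:ℝ)) := by
  simpa [neg_mul] using exp_neg_integrableOn_Ioi 0 hD


lemma pos_form {Ω : Type*} [MeasurableSpace Ω] (ν : Measure Ω) [SigmaFinite ν]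
    (G : Ω → ℝ → ℝ) (k kb : ℝ → ℝ → ℝ) (φ : ℝ → ℝ)
    (hG : Measurable (fun w : Ω × ℝ => G w.1 w.2))
    (hφ : Measurable φ)
    (hkm : Measurable (fun z : ℝ × ℝ => k z.1 z.2))
    (hk1 : ∀ p q : ℝ, Integrable (fun ω => G ω p * G ω q) ν)
    (hke : ∀ p q : ℝ, k p q = ∫ ω, G ω p * G ω q ∂ν)
    (hkb : ∀ p q : ℝ, ∫ ω, |G ω p * G ω q| ∂ν ≤ kb p q)
    (hdom : Integrable (fun z : ℝ × ℝ => kb z.1 z.2 * (|φ z.1| * |φ z.2|))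
      ((volume : Measure ℝ).prod volume)) :
    0 ≤ ∫ p : ℝ, (∫ q : ℝ, k p q * φ q) * φ p := by
  have hGm1 : Measurable fun w : (ℝ × ℝ) × Ω => G w.2 w.1.1 :=
    hG.comp (measurable_snd.prodMk measurable_fst.fst)
  have hGm2 : Measurable fun w : (ℝ × ℝ) × Ω => G w.2 w.1.2 :=
    hG.comp (measurable_snd.prodMk measurable_fst.snd)
  have hφ1 : Measurable fun w : (ℝ × ℝ) × Ω => φ w.1.1 := hφ.comp measurable_fst.fst
  have hφ2' : Measurable fun w : (ℝ × ℝ) × Ω => φ w.1.2 := hφ.comp measurable_fst.snd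
  have hWm : Measurable (Function.uncurry fun (z : ℝ × ℝ) (ω : Ω) =>
      G ω z.1 * G ω z.2 * (φ z.1 * φ z.2)) := (hGm1.mul hGm2).mul (hφ1.mul hφ2')
  have hkabs : ∀ p q : ℝ, |k p q| ≤ kb p q := by
    intro p q
    rw [hke p q]
    refine le_trans ?_ (hkb p q)
    simpa only [Real.norm_eq_abs] using
      norm_integral_le_integral_norm (μ := ν) (fun ω => G ω p * G ω q)
  have habsint : ∀ z : ℝ × ℝ, (∫ ω, ‖G ω z.1 * G ω z.2 * (φ z.1 * φ z.2)‖ ∂ν)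
      = (∫ ω, |G ω z.1 * G ω z.2| ∂ν) * (|φ z.1| * |φ z.2|) := by
    intro z
    rw [← integral_mul_const]
    congr 1; funext ω
    rw [Real.norm_eq_abs, abs_mul, abs_mul (φ z.1)]
  have hWint : Integrable (Function.uncurry fun (z : ℝ × ℝ) (ω : Ω) =>
      G ω z.1 * G ω z.2 * (φ z.1 * φ z.2)) (((volume : Measure ℝ).prod volume).prod ν) := by
    rw [integrable_prod_iff hWm.aestronglyMeasurable]
    simp only [Function.uncurry_apply_pair]
    constructor
    · exact Eventually.of_forall fun z => (hk1 z.1 z.2).mul_const _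
    · refine hdom.mono' ?_ ?_
      · have h0 : AEStronglyMeasurable (fun w : (ℝ × ℝ) × Ω =>
            ‖Function.uncurry (fun (z : ℝ × ℝ) (ω : Ω) =>
              G ω z.1 * G ω z.2 * (φ z.1 * φ z.2)) w‖)
            (((volume : Measure ℝ).prod volume).prod ν) := hWm.norm.aestronglyMeasurable
        have := h0.integral_prod_right'
        simpa only [Function.uncurry_apply_pair] using this
      refine Eventually.of_forall fun z => ?_
      rw [Real.norm_of_nonneg (integral_nonneg fun ω => norm_nonneg _), habsint z]
      exact mul_le_mul_of_nonneg_right (hkb z.1 z.2) (by positivity)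
  have hint2 : Integrable (Function.uncurry fun (p q : ℝ) => k p q * (φ q * φ p))
      ((volume : Measure ℝ).prod volume) := by
    refine hdom.mono' ?_ ?_
    · exact (hkm.mul ((hφ.comp measurable_snd).mul (hφ.comp measurable_fst))).aestronglyMeasurable
    · refine Eventually.of_forall fun z => ?_
      show ‖k z.1 z.2 * (φ z.2 * φ z.1)‖ ≤ _
      rw [Real.norm_eq_abs, abs_mul, abs_mul (φ z.2)]
      calc |k z.1 z.2| * (|φ z.2| * |φ z.1|) ≤ kb z.1 z.2 * (|φ z.2| * |φ z.1|) :=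
            mul_le_mul_of_nonneg_right (hkabs z.1 z.2) (by positivity)
        _ = kb z.1 z.2 * (|φ z.1| * |φ z.2|) := by ring
  have key : ∫ p : ℝ, (∫ q : ℝ, k p q * φ q) * φ p
      = ∫ ω, (∫ p, G ω p * φ p) ^ 2 ∂ν := by
    calc ∫ p : ℝ, (∫ q : ℝ, k p q * φ q) * φ p
        = ∫ p : ℝ, ∫ q : ℝ, k p q * (φ q * φ p) := by
          congr 1; funext p
          rw [← integral_mul_const]; congr 1; funext q; ring
      _ = ∫ z : ℝ × ℝ, k z.1 z.2 * (φ z.2 * φ z.1) ∂((volume : Measure ℝ).prod volume) :=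
          integral_integral hint2
      _ = ∫ z : ℝ × ℝ, ∫ ω, G ω z.1 * G ω z.2 * (φ z.1 * φ z.2) ∂ν
            ∂((volume : Measure ℝ).prod volume) := by
          refine integral_congr_ae (Eventually.of_forall fun z => ?_)
          show k z.1 z.2 * (φ z.2 * φ z.1) = ∫ ω, G ω z.1 * G ω z.2 * (φ z.1 * φ z.2) ∂ν
          rw [hke z.1 z.2, ← integral_mul_const]
          congr 1; funext ω; ring
      _ = ∫ ω, ∫ z : ℝ × ℝ, G ω z.1 * G ω z.2 * (φ z.1 * φ z.2)
            ∂((volume : Measure ℝ).prod volume) ∂ν := integral_integral_swap hWint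
      _ = ∫ ω, (∫ p, G ω p * φ p) ^ 2 ∂ν := by
          refine integral_congr_ae (Eventually.of_forall fun ω => ?_)
          show (∫ z : ℝ × ℝ, G ω z.1 * G ω z.2 * (φ z.1 * φ z.2)
            ∂((volume : Measure ℝ).prod volume)) = (∫ p, G ω p * φ p) ^ 2
          have h1 : ∀ z : ℝ × ℝ, G ω z.1 * G ω z.2 * (φ z.1 * φ z.2)
              = (G ω z.1 * φ z.1) * (G ω z.2 * φ z.2) := fun z => by ring
          rw [integral_congr_ae (Eventually.of_forall h1),
            integral_prod_mul (fun p => G ω p * φ p) (fun q => G ω q * φ q), sq]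
  rw [key]
  exact integral_nonneg fun ω => sq_nonneg _

/-- The product measure `(Lebesgue on (0,∞)) ⊗ Lebesgue`. -/
def nuM : Measure (ℝ × ℝ) := (volume.restrict (Ioi (0:ℝ))).prod volume

instance : SigmaFinite (volume.restrict (Ioi (0:ℝ))) := by infer_instance
instance : SigmaFinite nuM := by unfold nuM; infer_instance

lemma GG_nu {γ s : ℝ} (hγ : 0 < γ) (hγ1 : γ < 1) (hs : 0 < s) {ε : ℝ}
    (hε : ε = 1 ∨ ε = -1) (p q : ℝ) :
    Integrable (fun ω => GG γ s ε ω p * GG γ s ε ω q) nuM ∧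
    ∫ ω, GG γ s ε ω p * GG γ s ε ω q ∂nuM
      = (s/(2*π)) * ((p^2+q^2-2*γ*p*q+2*s^2)⁻¹ + ε * (p^2+q^2+2*γ*p*q+2*s^2)⁻¹) := by
  have hg1 : (0:ℝ) ≤ γ*(p-q)^2 := mul_nonneg hγ.le (sq_nonneg _)
  have hg0 : (0:ℝ) ≤ γ*(p+q)^2 := mul_nonneg hγ.le (sq_nonneg _)
  have hg2 : (0:ℝ) ≤ (1-γ)*(p^2+q^2) :=
    mul_nonneg (by linarith) (add_nonneg (sq_nonneg p) (sq_nonneg q))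
  have hs2 : (0:ℝ) < s^2 := pow_pos hs 2
  have hD1 : 0 < p^2+q^2-2*γ*p*q+2*s^2 := by
    have e1 : p^2+q^2-2*γ*p*q+2*s^2 = γ*(p-q)^2 + (1-γ)*(p^2+q^2) + 2*s^2 := by ring
    rw [e1]; linarith
  have hD0 : 0 < p^2+q^2+2*γ*p*q+2*s^2 := by
    have e0 : p^2+q^2+2*γ*p*q+2*s^2 = γ*(p+q)^2 + (1-γ)*(p^2+q^2) + 2*s^2 := by ring
    rw [e0]; linarith
  have hmes : AEStronglyMeasurable (fun ω : ℝ × ℝ => GG γ s ε ω p * GG γ s ε ω q) nuM := by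
    exact ((GG_measurable' γ s ε p).mul (GG_measurable' γ s ε q)).aestronglyMeasurable
  have hSint : IntegrableOn (fun t : ℝ => (s/(2*π)) *
      (exp (-((p^2+q^2-2*γ*p*q+2*s^2)*t)) + exp (-((p^2+q^2+2*γ*p*q+2*s^2)*t)))) (Ioi 0) :=
    ((exp_neg_mul_integrableOn hD1).add (exp_neg_mul_integrableOn hD0)).const_mul _
  have hint : Integrable (fun ω => GG γ s ε ω p * GG γ s ε ω q) nuM := by
    unfold nuM
    rw [integrable_prod_iff hmes]
    constructor
    · filter_upwards [ae_restrict_mem measurableSet_Ioi] with t ht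
      exact (GG_sec hγ hs hε p q ht).1
    · refine hSint.mono' ?_ ?_
      · have h0 : AEStronglyMeasurable (fun ω : ℝ × ℝ => ‖GG γ s ε ω p * GG γ s ε ω q‖)
            ((volume.restrict (Ioi (0:ℝ))).prod volume) := hmes.norm
        exact h0.integral_prod_right'
      · filter_upwards [ae_restrict_mem measurableSet_Ioi] with t ht
        rw [Real.norm_of_nonneg (integral_nonneg fun x => norm_nonneg _)]
        calc ∫ x, ‖GG γ s ε (t,x) p * GG γ s ε (t,x) q‖
            ≤ ∫ x, GG γ s 1 (t,x) p * GG γ s 1 (t,x) q := by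
              refine integral_mono_of_nonneg (Eventually.of_forall fun x => norm_nonneg _)
                (GG_sec hγ hs (Or.inl rfl) p q ht).1 (Eventually.of_forall fun x => ?_)
              show ‖GG γ s ε (t,x) p * GG γ s ε (t,x) q‖ ≤ GG γ s 1 (t,x) p * GG γ s 1 (t,x) q
              rw [Real.norm_eq_abs]
              exact GG_abs_mul_le hε (t,x) p q
          _ = (s/(2*π)) * (exp (-((p^2+q^2-2*γ*p*q+2*s^2)*t))
                + exp (-((p^2+q^2+2*γ*p*q+2*s^2)*t))) := by
              rw [(GG_sec hγ hs (Or.inl rfl) p q ht).2]; ring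
  refine ⟨hint, ?_⟩
  have hswap : ∫ ω, GG γ s ε ω p * GG γ s ε ω q ∂nuM
      = ∫ t in Ioi (0:ℝ), ∫ x, GG γ s ε (t,x) p * GG γ s ε (t,x) q := by
    unfold nuM at hint ⊢
    exact integral_prod _ hint
  rw [hswap]
  have hval : ∫ t in Ioi (0:ℝ), ∫ x, GG γ s ε (t,x) p * GG γ s ε (t,x) q
      = ∫ t in Ioi (0:ℝ), (s/(2*π)) * (exp (-((p^2+q^2-2*γ*p*q+2*s^2)*t))
          + ε * exp (-((p^2+q^2+2*γ*p*q+2*s^2)*t))) := by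
    refine integral_congr_ae ?_
    filter_upwards [ae_restrict_mem measurableSet_Ioi] with t ht
    exact (GG_sec hγ hs hε p q ht).2
  rw [hval]
  have hI1 : IntegrableOn (fun t : ℝ => exp (-((p^2+q^2-2*γ*p*q+2*s^2)*t))) (Ioi 0) :=
    exp_neg_mul_integrableOn hD1
  have hI0 : IntegrableOn (fun t : ℝ => ε * exp (-((p^2+q^2+2*γ*p*q+2*s^2)*t))) (Ioi 0) :=
    (exp_neg_mul_integrableOn hD0).const_mul ε
  rw [integral_const_mul, integral_add hI1 hI0, integral_const_mul ε,
    laplace_Ioi hD1, laplace_Ioi hD0]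

/-- Square-representation integrand for the `γ = 0` kernel. -/
def G0 (s t p : ℝ) : ℝ := Real.sqrt (s/π) * exp (-(p^2+s^2)*t)

lemma G0_measurable (s : ℝ) : Measurable (fun w : ℝ × ℝ => G0 s w.1 w.2) := by
  unfold G0; fun_prop

lemma G0_nu {s : ℝ} (hs : 0 < s) (p q : ℝ) :
    Integrable (fun t => G0 s t p * G0 s t q) (volume.restrict (Ioi 0)) ∧
    ∫ t in Ioi (0:ℝ), G0 s t p * G0 s t q = (s/π) * (p^2+q^2+2*s^2)⁻¹ := by
  have hD : (0:ℝ) < p^2+q^2+2*s^2 := by positivity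
  have hpt : ∀ t, G0 s t p * G0 s t q = (s/π) * exp (-((p^2+q^2+2*s^2)*t)) := by
    intro t
    have h1 : Real.sqrt (s/π) * Real.sqrt (s/π) = s/π :=
      Real.mul_self_sqrt (by positivity)
    have h2 : exp (-(p^2+s^2)*t) * exp (-(q^2+s^2)*t) = exp (-((p^2+q^2+2*s^2)*t)) := by
      rw [← Real.exp_add]; congr 1; ring
    calc G0 s t p * G0 s t q
        = (Real.sqrt (s/π) * Real.sqrt (s/π)) * (exp (-(p^2+s^2)*t) * exp (-(q^2+s^2)*t)) := by
          unfold G0; ring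
      _ = (s/π) * exp (-((p^2+q^2+2*s^2)*t)) := by rw [h1, h2]
  constructor
  · exact ((exp_neg_mul_integrableOn hD).const_mul (s/π)).congr
      (Eventually.of_forall fun t => (hpt t).symm)
  · rw [integral_congr_ae (Eventually.of_forall hpt), integral_const_mul, laplace_Ioi hD]

lemma kb_dom {γ s : ℝ} (hγ0 : 0 ≤ γ) (hγ1 : γ < 1) (hs : 0 < s) {φ : ℝ → ℝ}
    (hφ : Measurable φ) (hφ2 : Integrable (fun p => φ p ^ 2)) :
    Integrable (fun z : ℝ × ℝ => ((s/π) * ((1-γ)*(z.1^2+z.2^2)+2*s^2)⁻¹) * (|φ z.1| * |φ z.2|))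
      ((volume : Measure ℝ).prod volume) := by
  have hc : (0:ℝ) < 1 - γ := by linarith
  have hg2 : Integrable (fun p : ℝ => ((1-γ)*p^2+s^2)⁻¹) := by
    have hR : Real.sqrt (1-γ) / s ≠ 0 := by positivity
    have h1 : Integrable (fun x : ℝ => (1+((Real.sqrt (1-γ)/s)*x)^2)⁻¹) :=
      (integrable_comp_mul_left_iff (fun y : ℝ => (1+y^2)⁻¹) hR).2 integrable_inv_one_add_sq
    refine (h1.const_mul ((s^2)⁻¹)).congr (Eventually.of_forall fun x => ?_)
    have hsc : Real.sqrt (1-γ) ^ 2 = 1 - γ := Real.sq_sqrt hc.le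
    rw [eq_comm, inv_eq_iff_eq_inv]
    field_simp
    nlinarith [hsc, sq_nonneg x, sq_nonneg s]
  have hA : ∀ p : ℝ, (0:ℝ) < (1-γ)*p^2+s^2 := fun p => by positivity
  have hgφ : Integrable (fun p : ℝ => (Real.sqrt ((1-γ)*p^2+s^2))⁻¹ * |φ p|) := by
    refine Integrable.mono' ((hg2.add hφ2).const_mul (1/2)) ?_ ?_
    · have hm : Measurable fun p : ℝ => (Real.sqrt ((1-γ)*p^2+s^2))⁻¹ * |φ p| := by fun_prop
      exact hm.aestronglyMeasurable
    · refine Eventually.of_forall fun p => ?_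
      have h1 : ((Real.sqrt ((1-γ)*p^2+s^2))⁻¹) ^ 2 = ((1-γ)*p^2+s^2)⁻¹ := by
        rw [sq, ← mul_inv, Real.mul_self_sqrt (hA p).le]
      have h2 := two_mul_le_add_sq ((Real.sqrt ((1-γ)*p^2+s^2))⁻¹) (|φ p|)
      rw [Real.norm_of_nonneg (mul_nonneg (by positivity) (abs_nonneg _))]
      rw [h1, sq_abs] at h2
      simp only [Pi.add_apply]
      linarith
  refine Integrable.mono' ((hgφ.mul_prod hgφ).const_mul (s/π)) ?_ ?_
  · apply Measurable.aestronglyMeasurable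
    fun_prop
  · refine Eventually.of_forall fun z => ?_
    have hAz := hA z.1
    have hBz := hA z.2
    have hM : (0:ℝ) < (1-γ)*(z.1^2+z.2^2)+2*s^2 := by nlinarith
    have hab : Real.sqrt ((1-γ)*z.1^2+s^2) * Real.sqrt ((1-γ)*z.2^2+s^2)
        ≤ (1-γ)*(z.1^2+z.2^2)+2*s^2 := by
      have h2 := two_mul_le_add_sq (Real.sqrt ((1-γ)*z.1^2+s^2)) (Real.sqrt ((1-γ)*z.2^2+s^2))
      rw [Real.sq_sqrt hAz.le, Real.sq_sqrt hBz.le] at h2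
      nlinarith [Real.sqrt_nonneg ((1-γ)*z.1^2+s^2), Real.sqrt_nonneg ((1-γ)*z.2^2+s^2)]
    have habpos : 0 < Real.sqrt ((1-γ)*z.1^2+s^2) * Real.sqrt ((1-γ)*z.2^2+s^2) :=
      mul_pos (Real.sqrt_pos.2 hAz) (Real.sqrt_pos.2 hBz)
    have hkey : ((1-γ)*(z.1^2+z.2^2)+2*s^2)⁻¹
        ≤ (Real.sqrt ((1-γ)*z.1^2+s^2))⁻¹ * (Real.sqrt ((1-γ)*z.2^2+s^2))⁻¹ := by
      rw [← mul_inv]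
      exact inv_anti₀ habpos hab
    rw [Real.norm_of_nonneg (mul_nonneg (mul_nonneg (by positivity) (inv_nonneg.2 hM.le))
      (mul_nonneg (abs_nonneg _) (abs_nonneg _)))]
    calc (s/π) * ((1-γ)*(z.1^2+z.2^2)+2*s^2)⁻¹ * (|φ z.1| * |φ z.2|)
        ≤ (s/π) * ((Real.sqrt ((1-γ)*z.1^2+s^2))⁻¹ * (Real.sqrt ((1-γ)*z.2^2+s^2))⁻¹)
            * (|φ z.1| * |φ z.2|) := by
          refine mul_le_mul_of_nonneg_right (mul_le_mul_of_nonneg_left hkey (by positivity)) ?_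
          positivity
      _ = (s/π) * ((Real.sqrt ((1-γ)*z.1^2+s^2))⁻¹ * |φ z.1|
            * ((Real.sqrt ((1-γ)*z.2^2+s^2))⁻¹ * |φ z.2|)) := by ring

lemma Keps_form {γ s : ℝ} (hγ0 : 0 ≤ γ) (hγ1 : γ < 1) (hs : 0 < s) {ε : ℝ}
    (hε : ε = 1 ∨ ε = -1) (φ : ℝ → ℝ) (hφ : Measurable φ)
    (hφ2 : Integrable (fun p => φ p ^ 2)) :
    0 ≤ ∫ p : ℝ, (∫ q : ℝ, ((s/(2*π)) * ((p^2+q^2-2*γ*p*q+2*s^2)⁻¹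
        + ε * (p^2+q^2+2*γ*p*q+2*s^2)⁻¹)) * φ q) * φ p := by
  have hπ : (0:ℝ) < π := Real.pi_pos
  rcases eq_or_lt_of_le hγ0 with hγ | hγ
  · -- γ = 0
    subst hγ
    rcases hε with hε1 | hε1 <;> subst hε1
    · -- ε = 1 : use the one–dimensional representation G0
      have hkeq : ∀ p q : ℝ, (s/(2*π)) * ((p^2+q^2-2*0*p*q+2*s^2)⁻¹
          + 1 * (p^2+q^2+2*0*p*q+2*s^2)⁻¹) = (s/π) * (p^2+q^2+2*s^2)⁻¹ := by
        intro p q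
        have hD : (0:ℝ) < p^2+q^2+2*s^2 := by positivity
        have h1 : p^2+q^2-2*0*p*q+2*s^2 = p^2+q^2+2*s^2 := by ring
        have h2 : p^2+q^2+2*0*p*q+2*s^2 = p^2+q^2+2*s^2 := by ring
        rw [h1, h2]; field_simp; ring
      refine pos_form (volume.restrict (Ioi 0)) (G0 s)
        (fun p q => (s/(2*π)) * ((p^2+q^2-2*0*p*q+2*s^2)⁻¹ + 1 * (p^2+q^2+2*0*p*q+2*s^2)⁻¹))
        (fun p q => (s/π) * ((1-0)*(p^2+q^2)+2*s^2)⁻¹) φ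
        (G0_measurable s) hφ (by fun_prop) ?_ ?_ ?_ ?_
      · exact fun p q => (G0_nu hs p q).1
      · intro p q
        show (s/(2*π)) * ((p^2+q^2-2*0*p*q+2*s^2)⁻¹ + 1 * (p^2+q^2+2*0*p*q+2*s^2)⁻¹)
          = ∫ t in Ioi (0:ℝ), G0 s t p * G0 s t q
        rw [hkeq p q, (G0_nu hs p q).2]
      · intro p q
        have h1 : ∫ t in Ioi (0:ℝ), |G0 s t p * G0 s t q|
            = ∫ t in Ioi (0:ℝ), G0 s t p * G0 s t q := by
          refine integral_congr_ae (Eventually.of_forall fun t => ?_)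
          have h3 : (0:ℝ) ≤ G0 s t p * G0 s t q := by
            unfold G0; positivity
          show |G0 s t p * G0 s t q| = G0 s t p * G0 s t q
          rw [abs_of_nonneg h3]
        rw [h1, (G0_nu hs p q).2]
        show _ ≤ (s/π) * ((1-(0:ℝ))*(p^2+q^2)+2*s^2)⁻¹
        have h2 : (1-(0:ℝ))*(p^2+q^2)+2*s^2 = p^2+q^2+2*s^2 := by ring
        rw [h2]
      · exact kb_dom hγ0 hγ1 hs hφ hφ2
    · -- ε = -1 : the kernel vanishes identically
      have h0 : ∀ p : ℝ, (∫ q : ℝ, ((s/(2*π)) * ((p^2+q^2-2*0*p*q+2*s^2)⁻¹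
          + (-1) * (p^2+q^2+2*0*p*q+2*s^2)⁻¹)) * φ q) * φ p = 0 := by
        intro p
        have hz : (fun q : ℝ => ((s/(2*π)) * ((p^2+q^2-2*0*p*q+2*s^2)⁻¹
            + (-1) * (p^2+q^2+2*0*p*q+2*s^2)⁻¹)) * φ q) = fun _ => (0:ℝ) := by
          funext q
          have h1 : p^2+q^2-2*0*p*q+2*s^2 = p^2+q^2+2*0*p*q+2*s^2 := by ring
          rw [h1]; ring
        rw [hz, integral_zero, zero_mul]
      rw [integral_congr_ae (Eventually.of_forall h0), integral_zero]
  · -- γ > 0 : use the two–dimensional representation GG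
    refine pos_form nuM (GG γ s ε)
      (fun p q => (s/(2*π)) * ((p^2+q^2-2*γ*p*q+2*s^2)⁻¹ + ε * (p^2+q^2+2*γ*p*q+2*s^2)⁻¹))
      (fun p q => (s/π) * ((1-γ)*(p^2+q^2)+2*s^2)⁻¹) φ
      (GG_measurable γ s ε) hφ (by fun_prop) ?_ ?_ ?_ ?_
    · exact fun p q => (GG_nu hγ hγ1 hs hε p q).1
    · exact fun p q => ((GG_nu hγ hγ1 hs hε p q).2).symm
    · intro p q
      have hm : (0:ℝ) < (1-γ)*(p^2+q^2)+2*s^2 := by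
        have : (0:ℝ) ≤ (1-γ)*(p^2+q^2) :=
          mul_nonneg (by linarith) (add_nonneg (sq_nonneg p) (sq_nonneg q))
        nlinarith [pow_pos hs 2]
      have hD1 : 0 < p^2+q^2-2*γ*p*q+2*s^2 := by
        have e1 : p^2+q^2-2*γ*p*q+2*s^2 = γ*(p-q)^2 + ((1-γ)*(p^2+q^2)+2*s^2) := by ring
        rw [e1]; nlinarith [mul_nonneg hγ.le (sq_nonneg (p-q))]
      have hD0 : 0 < p^2+q^2+2*γ*p*q+2*s^2 := by
        have e0 : p^2+q^2+2*γ*p*q+2*s^2 = γ*(p+q)^2 + ((1-γ)*(p^2+q^2)+2*s^2) := by ring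
        rw [e0]; nlinarith [mul_nonneg hγ.le (sq_nonneg (p+q))]
      have hmle1 : (1-γ)*(p^2+q^2)+2*s^2 ≤ p^2+q^2-2*γ*p*q+2*s^2 := by
        nlinarith [mul_nonneg hγ.le (sq_nonneg (p-q))]
      have hmle0 : (1-γ)*(p^2+q^2)+2*s^2 ≤ p^2+q^2+2*γ*p*q+2*s^2 := by
        nlinarith [mul_nonneg hγ.le (sq_nonneg (p+q))]
      have hx1 : (p^2+q^2-2*γ*p*q+2*s^2)⁻¹ ≤ ((1-γ)*(p^2+q^2)+2*s^2)⁻¹ := inv_anti₀ hm hmle1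
      have hx0 : (p^2+q^2+2*γ*p*q+2*s^2)⁻¹ ≤ ((1-γ)*(p^2+q^2)+2*s^2)⁻¹ := inv_anti₀ hm hmle0
      have habs : ∫ ω, |GG γ s ε ω p * GG γ s ε ω q| ∂nuM
          ≤ ∫ ω, GG γ s 1 ω p * GG γ s 1 ω q ∂nuM := by
        refine integral_mono (GG_nu hγ hγ1 hs hε p q).1.abs
          (GG_nu hγ hγ1 hs (Or.inl rfl) p q).1 ?_
        intro ω
        exact GG_abs_mul_le hε ω p q
      refine le_trans habs ?_
      rw [(GG_nu hγ hγ1 hs (Or.inl rfl) p q).2]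
      have h0inv : 0 < ((1-γ)*(p^2+q^2)+2*s^2)⁻¹ := inv_pos.2 hm
      calc (s/(2*π)) * ((p^2+q^2-2*γ*p*q+2*s^2)⁻¹ + 1 * (p^2+q^2+2*γ*p*q+2*s^2)⁻¹)
          ≤ (s/(2*π)) * (((1-γ)*(p^2+q^2)+2*s^2)⁻¹ + ((1-γ)*(p^2+q^2)+2*s^2)⁻¹) := by
            refine mul_le_mul_of_nonneg_left ?_ (by positivity)
            linarith
        _ = (s/π) * ((1-γ)*(p^2+q^2)+2*s^2)⁻¹ := by
            field_simp; ring
    · exact kb_dom hγ0 hγ1 hs hφ hφ2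

lemma Tker_eq {θ : ℝ} (hθ : θ ∈ Set.Ico (Real.pi/2) Real.pi) (p q : ℝ) :
    Tker θ p q = (Real.sin θ/π) * (p^2+q^2+2*(-Real.cos θ)*p*q+2*Real.sin θ^2)⁻¹ := by
  have hπ : (0:ℝ) < π := Real.pi_pos
  have hs : 0 < Real.sin θ := Real.sin_pos_of_pos_of_lt_pi (by linarith [hθ.1]) hθ.2
  have hγ0 : 0 ≤ -Real.cos θ := by
    have := Real.cos_nonpos_of_pi_div_two_le_of_le hθ.1 (by linarith [hθ.2]); linarith
  have hD : 0 < p^2+q^2+2*(-Real.cos θ)*p*q+2*Real.sin θ^2 := by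
    have h1 : 0 ≤ (-Real.cos θ)*(p+q)^2 := mul_nonneg hγ0 (sq_nonneg _)
    have hγ1 : -Real.cos θ ≤ 1 := by nlinarith [Real.neg_one_le_cos θ]
    have h2 : 0 ≤ (1-(-Real.cos θ))*(p^2+q^2) :=
      mul_nonneg (by linarith) (add_nonneg (sq_nonneg p) (sq_nonneg q))
    have e : p^2+q^2+2*(-Real.cos θ)*p*q+2*Real.sin θ^2
        = (-Real.cos θ)*(p+q)^2 + (1-(-Real.cos θ))*(p^2+q^2) + 2*Real.sin θ^2 := by ring
    rw [e]; nlinarith [pow_pos hs 2]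
  unfold Tker
  have e1 : (p^2 - 2*Real.cos θ*p*q + q^2)/(2*Real.sin θ^2) + 1
      = (p^2+q^2+2*(-Real.cos θ)*p*q+2*Real.sin θ^2)/(2*Real.sin θ^2) := by
    field_simp; ring
  rw [e1, inv_div]
  have key : ∀ A : ℝ, A ≠ 0 → 1/(2*π*Real.sin θ) * (2*Real.sin θ^2/A) = (Real.sin θ/π) * A⁻¹ := by
    intro A hA
    field_simp
  exact key _ hD.ne'

lemma TkerPlus_eq {θ : ℝ} (hθ : θ ∈ Set.Ico (Real.pi/2) Real.pi) (p q : ℝ) :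
    TkerPlus θ p q = (Real.sin θ/(2*π)) *
      ((p^2+q^2-2*(-Real.cos θ)*p*q+2*Real.sin θ^2)⁻¹
        + 1 * (p^2+q^2+2*(-Real.cos θ)*p*q+2*Real.sin θ^2)⁻¹) := by
  unfold TkerPlus
  rw [Tker_eq hθ p q, Tker_eq hθ (-p) q]
  have e : (-p)^2+q^2+2*(-Real.cos θ)*(-p)*q+2*Real.sin θ^2
      = p^2+q^2-2*(-Real.cos θ)*p*q+2*Real.sin θ^2 := by ring
  rw [e]
  ring

lemma TkerMinus_eq {θ : ℝ} (hθ : θ ∈ Set.Ico (Real.pi/2) Real.pi) (p q : ℝ) :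
    TkerMinus θ p q = -((Real.sin θ/(2*π)) *
      ((p^2+q^2-2*(-Real.cos θ)*p*q+2*Real.sin θ^2)⁻¹
        + (-1) * (p^2+q^2+2*(-Real.cos θ)*p*q+2*Real.sin θ^2)⁻¹)) := by
  unfold TkerMinus
  rw [Tker_eq hθ p q, Tker_eq hθ (-p) q]
  have e : (-p)^2+q^2+2*(-Real.cos θ)*(-p)*q+2*Real.sin θ^2
      = p^2+q^2-2*(-Real.cos θ)*p*q+2*Real.sin θ^2 := by ring
  rw [e]
  ring

lemma Hsp_inner_eq (f g : Hsp) : ⟪f, g⟫ = ∫ a, f a * g a := by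
  rw [MeasureTheory.L2.inner_def]
  refine integral_congr_ae (Eventually.of_forall fun a => ?_)
  simp [RCLike.inner_apply, mul_comm]

/-- For every `θ ∈ [π/2,π)`, the self-adjoint operators `T̂₀ − T̂_θ⁺` and `T̂₀ + T̂_θ⁻` on
`L²(ℝ)` are bounded above by `2^{−1/2}·Id` in the quadratic form sense; in particular neither
operator has an eigenvalue `k > 1/√2`.  (`T̂₀` is multiplication by `(p²+2)^{−1/2}`.) -/
theorem no_boundstate_odd_sectors (θ : ℝ) (hθ : θ ∈ Set.Ico (Real.pi / 2) Real.pi)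
    (T0 Tp Tm : Hsp →L[ℝ] Hsp)
    (hT0 : ∀ φ : Hsp, ∀ᵐ p : ℝ, T0 φ p = (Real.sqrt (p ^ 2 + 2))⁻¹ * φ p)
    (hTp : ∀ φ : Hsp, ∀ᵐ p : ℝ, Tp φ p = ∫ q : ℝ, TkerPlus θ p q * φ q)
    (hTm : ∀ φ : Hsp, ∀ᵐ p : ℝ, Tm φ p = ∫ q : ℝ, TkerMinus θ p q * φ q) :
    (∀ φ : Hsp, ⟪(T0 - Tp) φ, φ⟫ ≤ (Real.sqrt 2)⁻¹ * ‖φ‖ ^ 2) ∧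
    (∀ φ : Hsp, ⟪(T0 + Tm) φ, φ⟫ ≤ (Real.sqrt 2)⁻¹ * ‖φ‖ ^ 2) ∧
    (∀ k : ℝ, (Real.sqrt 2)⁻¹ < k → ∀ φ : Hsp, φ ≠ 0 → (T0 - Tp) φ ≠ k • φ) ∧
    (∀ k : ℝ, (Real.sqrt 2)⁻¹ < k → ∀ φ : Hsp, φ ≠ 0 → (T0 + Tm) φ ≠ k • φ) := by
  have hπ : (0:ℝ) < π := Real.pi_pos
  have hs : 0 < Real.sin θ := Real.sin_pos_of_pos_of_lt_pi (by linarith [hθ.1]) hθ.2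
  have hγ0 : 0 ≤ -Real.cos θ := by
    have := Real.cos_nonpos_of_pi_div_two_le_of_le hθ.1 (by linarith [hθ.2]); linarith
  have hγ1 : -Real.cos θ < 1 := by
    have hhalf : 0 < Real.cos (θ/2) :=
      Real.cos_pos_of_mem_Ioo ⟨by linarith [hθ.1], by linarith [hθ.2]⟩
    have h := Real.cos_sq (θ/2)
    have h2 : (2:ℝ)*(θ/2) = θ := by ring
    rw [h2] at h
    nlinarith
  -- the T0 quadratic form bound
  have hT0b : ∀ φ : Hsp, ⟪T0 φ, φ⟫ ≤ (Real.sqrt 2)⁻¹ * ‖φ‖^2 := by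
    intro φ
    have hφsq : Integrable (fun a : ℝ => (φ : ℝ → ℝ) a ^ 2) :=
      (memLp_two_iff_integrable_sq (Lp.aestronglyMeasurable φ)).1 (Lp.memLp φ)
    rw [Hsp_inner_eq]
    have hb : ∫ a, T0 φ a * φ a ≤ ∫ a, (Real.sqrt 2)⁻¹ * (φ : ℝ → ℝ) a^2 := by
      refine integral_mono_of_nonneg ?_ (hφsq.const_mul _) ?_
      · filter_upwards [hT0 φ] with a ha
        show 0 ≤ T0 φ a * φ a
        rw [ha, show (Real.sqrt (a^2+2))⁻¹ * (φ : ℝ → ℝ) a * (φ : ℝ → ℝ) a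
          = (Real.sqrt (a^2+2))⁻¹ * (φ : ℝ → ℝ) a^2 by ring]
        positivity
      · filter_upwards [hT0 φ] with a ha
        show T0 φ a * φ a ≤ (Real.sqrt 2)⁻¹ * (φ : ℝ → ℝ) a^2
        rw [ha, show (Real.sqrt (a^2+2))⁻¹ * (φ : ℝ → ℝ) a * (φ : ℝ → ℝ) a
          = (Real.sqrt (a^2+2))⁻¹ * (φ : ℝ → ℝ) a^2 by ring]
        refine mul_le_mul_of_nonneg_right ?_ (sq_nonneg _)
        refine inv_anti₀ (Real.sqrt_pos.2 (by norm_num)) (Real.sqrt_le_sqrt (by nlinarith [sq_nonneg a]))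
    refine le_trans hb ?_
    rw [integral_const_mul]
    refine mul_le_mul_of_nonneg_left (le_of_eq ?_) (by positivity)
    have : ∫ a, (φ : ℝ → ℝ) a^2 = ∫ a, (φ : ℝ → ℝ) a * (φ : ℝ → ℝ) a := by
      refine integral_congr_ae (Eventually.of_forall fun a => ?_)
      show (φ : ℝ → ℝ) a^2 = (φ : ℝ → ℝ) a * (φ : ℝ → ℝ) a
      ring
    rw [this, ← Hsp_inner_eq, real_inner_self_eq_norm_sq]
  -- positive form of Tp, negative form of Tm
  have hTpb : ∀ φ : Hsp, 0 ≤ ⟪Tp φ, φ⟫ := by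
    intro φ
    have hφsq : Integrable (fun a : ℝ => (φ : ℝ → ℝ) a ^ 2) :=
      (memLp_two_iff_integrable_sq (Lp.aestronglyMeasurable φ)).1 (Lp.memLp φ)
    set f : ℝ → ℝ := (Lp.aestronglyMeasurable φ).mk ⇑φ with hf
    have hfm : Measurable f := (Lp.aestronglyMeasurable φ).stronglyMeasurable_mk.measurable
    have hfe : (φ : ℝ → ℝ) =ᵐ[volume] f := (Lp.aestronglyMeasurable φ).ae_eq_mk
    have hf2 : Integrable (fun a => f a^2) := hφsq.congr (hfe.mono fun a h => by simp only [h])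
    rw [Hsp_inner_eq]
    have heq : (fun a : ℝ => Tp φ a * φ a) =ᵐ[volume]
        fun a => (∫ q : ℝ, ((Real.sin θ/(2*π)) *
          ((a^2+q^2-2*(-Real.cos θ)*a*q+2*Real.sin θ^2)⁻¹
            + 1 * (a^2+q^2+2*(-Real.cos θ)*a*q+2*Real.sin θ^2)⁻¹)) * f q) * f a := by
      filter_upwards [hTp φ, hfe] with a h1 h2
      rw [h1, h2]
      congr 1
      refine integral_congr_ae ?_
      filter_upwards [hfe] with q hq
      rw [hq, TkerPlus_eq hθ a q]
    rw [integral_congr_ae heq]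
    exact Keps_form hγ0 hγ1 hs (Or.inl rfl) f hfm hf2
  have hTmb : ∀ φ : Hsp, ⟪Tm φ, φ⟫ ≤ 0 := by
    intro φ
    have hφsq : Integrable (fun a : ℝ => (φ : ℝ → ℝ) a ^ 2) :=
      (memLp_two_iff_integrable_sq (Lp.aestronglyMeasurable φ)).1 (Lp.memLp φ)
    set f : ℝ → ℝ := (Lp.aestronglyMeasurable φ).mk ⇑φ with hf
    have hfm : Measurable f := (Lp.aestronglyMeasurable φ).stronglyMeasurable_mk.measurable
    have hfe : (φ : ℝ → ℝ) =ᵐ[volume] f := (Lp.aestronglyMeasurable φ).ae_eq_mk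
    have hf2 : Integrable (fun a => f a^2) := hφsq.congr (hfe.mono fun a h => by simp only [h])
    have key := Keps_form hγ0 hγ1 hs (Or.inr rfl) f hfm hf2
    rw [Hsp_inner_eq]
    have heq : (fun a : ℝ => Tm φ a * φ a) =ᵐ[volume]
        fun a => -((∫ q : ℝ, ((Real.sin θ/(2*π)) *
          ((a^2+q^2-2*(-Real.cos θ)*a*q+2*Real.sin θ^2)⁻¹
            + (-1) * (a^2+q^2+2*(-Real.cos θ)*a*q+2*Real.sin θ^2)⁻¹)) * f q) * f a) := by
      filter_upwards [hTm φ, hfe] with a h1 h2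
      rw [h1, h2]
      have hinner2 : ∫ q : ℝ, TkerMinus θ a q * φ q
          = - ∫ q : ℝ, ((Real.sin θ/(2*π)) *
            ((a^2+q^2-2*(-Real.cos θ)*a*q+2*Real.sin θ^2)⁻¹
              + (-1) * (a^2+q^2+2*(-Real.cos θ)*a*q+2*Real.sin θ^2)⁻¹)) * f q := by
        rw [← integral_neg]
        refine integral_congr_ae ?_
        filter_upwards [hfe] with q hq
        show TkerMinus θ a q * φ q = _
        rw [hq, TkerMinus_eq hθ a q]
        ring
      rw [hinner2]
      ring
    rw [integral_congr_ae heq, integral_neg]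
    linarith [key]
  have H1 : ∀ φ : Hsp, ⟪(T0 - Tp) φ, φ⟫ ≤ (Real.sqrt 2)⁻¹ * ‖φ‖ ^ 2 := by
    intro φ
    rw [ContinuousLinearMap.sub_apply, inner_sub_left]
    have h1 := hT0b φ
    have h2 := hTpb φ
    linarith
  have H2 : ∀ φ : Hsp, ⟪(T0 + Tm) φ, φ⟫ ≤ (Real.sqrt 2)⁻¹ * ‖φ‖ ^ 2 := by
    intro φ
    rw [ContinuousLinearMap.add_apply, inner_add_left]
    have h1 := hT0b φ
    have h2 := hTmb φ
    linarith
  refine ⟨H1, H2, ?_, ?_⟩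
  · intro k hk φ hφ0 heq
    have h := H1 φ
    rw [heq, real_inner_smul_left, real_inner_self_eq_norm_sq] at h
    have hn : 0 < ‖φ‖^2 := by
      have : 0 < ‖φ‖ := norm_pos_iff.2 hφ0
      positivity
    nlinarith
  · intro k hk φ hφ0 heq
    have h := H2 φ
    rw [heq, real_inner_smul_left, real_inner_self_eq_norm_sq] at h
    have hn : 0 < ‖φ‖^2 := by
      have : 0 < ‖φ‖ := norm_pos_iff.2 hφ0
      positivity
    nlinarith
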